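/- arXiv:1209.1496 — 3 statements merged into one kernel-verified Lean document; each statement's English description precedes it below -/
import Mathlib

section
/- Let d ≥ 1 be an integer, M be a finite matroid, N be a minor of M, and X ⊆ E(N). If X is d-thick in M, then X is d-thick in N. -/
open Set
open scoped Classical

namespace Matroid

variable {α β : Type*}

/-- The rank of a set `X` in a matroid `M`: the maximum size of an independent subset of `X`
(appropriate for finite matroids). -/
noncomputable def rk (M : Matroid α) (X : Set α) : ℕ :=
  sSup {n | ∃ I, I ⊆ X ∧ M.Indep I ∧ I.ncard = n}

/-- The rank `r(M)` of a matroid `M`. -/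
noncomputable def rank (M : Matroid α) : ℕ := M.rk M.E

/-- The deletion `M \ D` of a set `D` from `M`. -/
def delete' (M : Matroid α) (D : Set α) : Matroid α := M ↾ (M.E \ D)

/-- The contraction `M / C` of a set `C` in `M`, defined via duality. -/
def contract' (M : Matroid α) (C : Set α) : Matroid α := (M✶.delete' C)✶

/-- `N` is a minor of `M`, i.e. `N = M / C \ D` for some sets `C` and `D`. -/
def IsMinor' (N M : Matroid α) : Prop := ∃ C D : Set α, (M.contract' C).delete' D = N

/-- An isomorphism between matroids, possibly on different ground types. -/
def IsIso (M : Matroid α) (N : Matroid β) : Prop :=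
  ∃ e : M.E ≃ N.E, ∀ I : Set M.E, M.Indep ((↑) '' I) ↔ N.Indep ((↑) '' (e '' I))

/-- `N` is isomorphic to the uniform matroid `U_{k,n}`: the ground set has `n` elements and
the independent sets are exactly the subsets with at most `k` elements. -/
def IsUnif (N : Matroid α) (k n : ℕ) : Prop :=
  N.E.Finite ∧ N.E.ncard = n ∧ ∀ I ⊆ N.E, (N.Indep I ↔ I.ncard ≤ k)

/-- `M` has a minor isomorphic to `U_{k,n}`. -/
def HasUnifMinor (M : Matroid α) (k n : ℕ) : Prop :=
  ∃ N : Matroid α, N.IsMinor' M ∧ N.IsUnif k n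

/-- `τ_a(M)`: the minimum size of a collection of subsets of `E(M)`, each of rank at most `a`,
whose union is `E(M)`. -/
noncomputable def tau (M : Matroid α) (a : ℕ) : ℕ :=
  sInf {n | ∃ 𝒞 : Finset (Set α),
    𝒞.card = n ∧ (∀ X ∈ 𝒞, X ⊆ M.E ∧ M.rk X ≤ a) ∧ M.E ⊆ ⋃₀ ↑𝒞}

/-- `M` is `d`-thick: every collection of sets, each of rank less than `r(M)`, whose union
is `E(M)`, has at least `d` members. -/
def Thick (M : Matroid α) (d : ℕ) : Prop :=
  ∀ 𝒞 : Finset (Set α), (∀ X ∈ 𝒞, X ⊆ M.E ∧ M.rk X < M.rank) → M.E ⊆ ⋃₀ ↑𝒞 → d ≤ 𝒞.card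

/-- A set `X` is `d`-thick in `M` if the restriction `M|X` is `d`-thick. -/
def ThickIn (M : Matroid α) (d : ℕ) (X : Set α) : Prop := (M ↾ X).Thick d

/-- A collection of sets is simple in `M` if its members are pairwise dissimilar,
i.e. distinct members have distinct closures. -/
def SimpleColl (M : Matroid α) (𝒳 : Finset (Set α)) : Prop :=
  ∀ X ∈ 𝒳, ∀ Y ∈ 𝒳, M.closure X = M.closure Y → X = Y

/-- `ε_M(𝒳)`: the maximum size of a subcollection of `𝒳` that is simple in `M`. -/
noncomputable def eps (M : Matroid α) (𝒳 : Finset (Set α)) : ℕ :=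
  sSup {n | ∃ 𝒴 : Finset (Set α), 𝒴 ⊆ 𝒳 ∧ M.SimpleColl 𝒴 ∧ 𝒴.card = n}

/-- `𝒳` is `d`-firm in `M`: every subcollection `𝒳'` with `|𝒳'| > |𝒳|/d` has the same rank
as `𝒳`. -/
def Firm (M : Matroid α) (d : ℕ) (𝒳 : Finset (Set α)) : Prop :=
  ∀ 𝒳' ⊆ 𝒳, 𝒳.card < d * 𝒳'.card → M.rk (⋃₀ ↑𝒳') = M.rk (⋃₀ ↑𝒳)

/-- `ℱ` is a cover of the collection `𝒳` in `M`: every member of `𝒳` is contained in a member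
of `ℱ`. -/
def CoverOf (M : Matroid α) (ℱ 𝒳 : Finset (Set α)) : Prop :=
  (∀ F ∈ ℱ, F ⊆ M.E) ∧ ∀ X ∈ 𝒳, ∃ F ∈ ℱ, X ⊆ F

/-- `ℱ` is a cover of the matroid `M`: every element of `E(M)` lies in a member of `ℱ`. -/
def CoverOfGround (M : Matroid α) (ℱ : Finset (Set α)) : Prop :=
  (∀ F ∈ ℱ, F ⊆ M.E) ∧ M.E ⊆ ⋃₀ ↑ℱ

/-- The weight `wt^d_M(ℱ) = Σ_{F ∈ ℱ} d^{r_M(F)}`. -/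
noncomputable def wt (M : Matroid α) (d : ℕ) (ℱ : Finset (Set α)) : ℕ :=
  ∑ F ∈ ℱ, d ^ M.rk F

/-- `ℱ` is a `d`-minimal cover of the collection `𝒳` in `M`. -/
def MinimalCoverOf (M : Matroid α) (d : ℕ) (ℱ 𝒳 : Finset (Set α)) : Prop :=
  M.CoverOf ℱ 𝒳 ∧ ∀ ℱ' : Finset (Set α), M.CoverOf ℱ' 𝒳 → M.wt d ℱ ≤ M.wt d ℱ'

/-- `ℱ` is a `d`-minimal cover of the matroid `M`. -/
def MinimalCoverOfGround (M : Matroid α) (d : ℕ) (ℱ : Finset (Set α)) : Prop :=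
  M.CoverOfGround ℱ ∧ ∀ ℱ' : Finset (Set α), M.CoverOfGround ℱ' → M.wt d ℱ ≤ M.wt d ℱ'

/-- `τ^d(M)`: the minimum weight of a cover of `M`. -/
noncomputable def tauW (M : Matroid α) (d : ℕ) : ℕ :=
  sInf {n | ∃ ℱ : Finset (Set α), M.CoverOfGround ℱ ∧ M.wt d ℱ = n}

/-- `𝒳` is `d`-scattered in `M`: every member of `𝒳` is `d`-thick in `M`, and
`{cl_M(X) : X ∈ 𝒳}` is a `d`-minimal cover of `𝒳` in `M`. -/
def Scattered (M : Matroid α) (d : ℕ) (𝒳 : Finset (Set α)) : Prop :=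
  (∀ X ∈ 𝒳, M.ThickIn d X) ∧ M.MinimalCoverOf d (𝒳.image M.closure) 𝒳

/-- `(M, 𝒮; L)` is an `(a, q, h, d)`-pyramid, where `h = L.length` and `L` lists the
elements `e_1, …, e_h`. -/
def IsPyramid (M : Matroid α) (𝒮 : Finset (Set α)) (L : List α) (a q d : ℕ) : Prop :=
  L.Nodup ∧ M.Indep {x | x ∈ L} ∧
  𝒮.Nonempty ∧
  (∀ S ∈ 𝒮, S ⊆ M.E ∧ M.rk S = a) ∧
  (∀ S ∈ 𝒮, M.rk (S ∪ {x | x ∈ L}) = M.rk S + M.rk {x | x ∈ L}) ∧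
  (∀ i < L.length, ∀ S ∈ 𝒮, ∃ f : Fin q → Set α,
    (∀ j, f j ∈ 𝒮) ∧
    (∀ j k, j ≠ k →
      (M.contract' {x | x ∈ L.take i}).closure (f j) ≠
        (M.contract' {x | x ∈ L.take i}).closure (f k)) ∧
    (∀ j, (M.contract' {x | x ∈ L.take (i+1)}).closure (f j) =
      (M.contract' {x | x ∈ L.take (i+1)}).closure S)) ∧
  (∀ S ∈ 𝒮, M.ThickIn d S)

/-- `M` is representable over the field `F`. -/
def RepresentableOver (M : Matroid α) (F : Type*) [Field F] : Prop :=
  ∃ (n : ℕ) (φ : α → (Fin n → F)),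
    ∀ I ⊆ M.E, (M.Indep I ↔ LinearIndependent F (fun x : I => φ x))

end Matroid

namespace Matroid

section Aux
variable {α : Type*} {M : Matroid α} {I J X Y C B C' : Set α}

lemma aux_bdd (M : Matroid α) [M.Finite] (X : Set α) :
    BddAbove {n | ∃ I, I ⊆ X ∧ M.Indep I ∧ I.ncard = n} := by
  refine ⟨M.E.ncard, ?_⟩
  rintro n ⟨I, hIX, hI, rfl⟩
  exact Set.ncard_le_ncard hI.subset_ground M.ground_finite

lemma aux_ncard_le_rk [M.Finite] (hIX : I ⊆ X) (hI : M.Indep I) : I.ncard ≤ M.rk X :=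
  le_csSup (M.aux_bdd X) ⟨I, hIX, hI, rfl⟩

lemma aux_rk_le {m : ℕ} (h : ∀ I, I ⊆ X → M.Indep I → I.ncard ≤ m) : M.rk X ≤ m :=
  csSup_le ⟨0, ∅, empty_subset _, M.empty_indep, by simp⟩
    (by rintro n ⟨I, hIX, hI, rfl⟩; exact h I hIX hI)

lemma aux_basis'_rk [M.Finite] (hI : M.IsBasis' I X) : M.rk X = I.ncard := by
  refine le_antisymm (aux_rk_le fun J hJX hJ => ?_)
    (aux_ncard_le_rk hI.subset hI.indep)
  obtain ⟨I', hI', hJI'⟩ := hJ.subset_isBasis'_of_subset hJX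
  have h1 : I'.ncard = I.ncard := by
    rw [Set.ncard_def, Set.ncard_def, hI'.encard_eq_encard hI]
  exact h1 ▸ Set.ncard_le_ncard hJI' (M.set_finite I' hI'.indep.subset_ground)

lemma aux_basis_rk [M.Finite] (hI : M.IsBasis I X) : M.rk X = I.ncard :=
  aux_basis'_rk hI.isBasis'

lemma aux_rk_restrict (h : Y ⊆ X) : (M ↾ X).rk Y = M.rk Y := by
  unfold rk
  congr 1
  ext n
  exact ⟨fun ⟨I, h1, h2, h3⟩ => ⟨I, h1, h2.1, h3⟩,
    fun ⟨I, h1, h2, h3⟩ => ⟨I, h1, ⟨h2, h1.trans h⟩, h3⟩⟩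

lemma aux_contract_ground (M : Matroid α) (C : Set α) : (M.contract' C).E = M.E \ C := rfl

lemma aux_contract_base_iff' (hC : C ⊆ M.E) :
    (M.contract' C).IsBase B ↔
      M✶.IsBasis ((M.E \ C) \ B) (M.E \ C) ∧ B ⊆ M.E \ C := by
  rw [contract', delete', dual_isBase_iff']
  simp only [restrict_ground_eq, dual_ground]
  rw [isBase_restrict_iff (show M.E \ C ⊆ M✶.E from diff_subset)]

lemma aux_contract_base_iff (hC : C ⊆ M.E) :
    (M.contract' C).IsBase B ↔
      (∃ C', M.IsBasis C' C ∧ M.IsBase (B ∪ C')) ∧ Disjoint B C := by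
  rw [aux_contract_base_iff' hC]
  constructor
  · rintro ⟨hJ, hB⟩
    obtain ⟨Bs, hBs, hEq⟩ := hJ.exists_isBase
    have hMB : M.IsBase (M.E \ Bs) := hBs.compl_isBase_of_dual
    have hBsE : Bs ⊆ M.E := hBs.subset_ground
    have hiff := hMB.inter_isBasis_iff_compl_inter_isBasis_dual hC
    have hcompl : M.E \ (M.E \ Bs) = Bs := diff_diff_cancel_left hBsE
    rw [hcompl] at hiff
    have hbC : M.IsBasis ((M.E \ Bs) ∩ C) C := by
      rw [hiff, ← hEq]; exact hJ
    have hBBs : ∀ x ∈ B, x ∉ Bs := by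
      intro x hx hxBs
      have hxEC : x ∈ M.E \ C := hB hx
      have : x ∈ (M.E \ C) \ B := hEq ▸ ⟨hxBs, hxEC⟩
      exact this.2 hx
    have hunion : B ∪ ((M.E \ Bs) ∩ C) = M.E \ Bs := by
      ext x
      constructor
      · rintro (hx | hx)
        · exact ⟨(hB hx).1, hBBs x hx⟩
        · exact hx.1
      · rintro ⟨hxE, hxBs⟩
        by_cases hxC : x ∈ C
        · exact Or.inr ⟨⟨hxE, hxBs⟩, hxC⟩
        · left
          by_contra hxB
          have : x ∈ Bs ∩ (M.E \ C) := hEq ▸ (show x ∈ (M.E \ C) \ B from ⟨⟨hxE, hxC⟩, hxB⟩)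
          exact hxBs this.1
    refine ⟨⟨(M.E \ Bs) ∩ C, hbC, ?_⟩, (subset_diff.mp hB).2⟩
    rw [hunion]; exact hMB
  · rintro ⟨⟨C', hC', hBase⟩, hdj⟩
    have hC'C : C' ⊆ C := hC'.subset
    have hBE : B ⊆ M.E := subset_union_left.trans hBase.subset_ground
    have hBsub : B ⊆ M.E \ C := subset_diff.mpr ⟨hBE, hdj⟩
    refine ⟨?_, hBsub⟩
    have hiff := hBase.inter_isBasis_iff_compl_inter_isBasis_dual hC
    have h1 : (B ∪ C') ∩ C = C' := by
      rw [union_inter_distrib_right, hdj.inter_eq, inter_eq_self_of_subset_left hC'C,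
        empty_union]
    have h2 : (M.E \ (B ∪ C')) ∩ (M.E \ C) = (M.E \ C) \ B := by
      ext x
      simp only [mem_inter_iff, mem_diff, mem_union]
      constructor
      · rintro ⟨⟨hE, hx⟩, ⟨-, hxC⟩⟩
        exact ⟨⟨hE, hxC⟩, fun hB' => hx (Or.inl hB')⟩
      · rintro ⟨⟨hE, hxC⟩, hxB⟩
        exact ⟨⟨hE, fun h => h.elim hxB (fun hC'' => hxC (hC'C hC''))⟩, hE, hxC⟩
    rw [h1, h2] at hiff
    exact hiff.mp hC'

lemma aux_contract_indep_of (hC' : M.IsBasis C' C) (hJ : M.Indep (J ∪ C'))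
    (hdj : Disjoint J C) : (M.contract' C).Indep J := by
  have hC : C ⊆ M.E := hC'.subset_ground
  obtain ⟨B', hB', hJB'⟩ := hJ.exists_isBase_superset
  have hC'B' : C' ⊆ B' := subset_union_right.trans hJB'
  have hint : B' ∩ C = C' :=
    (hC'.eq_of_subset_indep (hB'.indep.subset inter_subset_left)
      (subset_inter hC'B' hC'.subset) inter_subset_right).symm
  have hB : (M.contract' C).IsBase (B' \ C) := by
    rw [aux_contract_base_iff hC]
    refine ⟨⟨C', hC', ?_⟩, disjoint_sdiff_left⟩
    have : B' \ C ∪ C' = B' := by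
      rw [← hint]; exact diff_union_inter B' C
    rw [this]; exact hB'
  exact indep_iff.mpr ⟨B' \ C, hB, subset_diff.mpr ⟨subset_union_left.trans hJB', hdj⟩⟩

lemma aux_contract_indep_iff (hC : C ⊆ M.E) :
    (M.contract' C).Indep J ↔
      (∃ C', M.IsBasis C' C ∧ M.Indep (J ∪ C')) ∧ Disjoint J C := by
  constructor
  · intro hJ
    obtain ⟨B, hB, hJB⟩ := hJ.exists_isBase_superset
    rw [aux_contract_base_iff hC] at hB
    obtain ⟨⟨C', hC', hBase⟩, hdj⟩ := hB
    exact ⟨⟨C', hC', hBase.indep.subset (union_subset_union_left _ hJB)⟩,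
      hdj.mono_left hJB⟩
  · rintro ⟨⟨C', hC', hJC'⟩, hdj⟩
    exact aux_contract_indep_of hC' hJC' hdj


lemma aux_key [M.Finite] (hC : C ⊆ M.E) (hYX : Y ⊆ X)
    (hX : X ⊆ M.E \ C) (hrk : M.rk X ≤ M.rk Y) :
    (M.contract' C).rk X ≤ (M.contract' C).rk Y := by
  haveI : (M.contract' C).Finite :=
    ⟨M.ground_finite.subset (by rw [aux_contract_ground]; exact diff_subset)⟩
  have hXE : X ⊆ M.E := hX.trans diff_subset
  have hYE : Y ⊆ M.E := hYX.trans hXE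
  obtain ⟨J, hJ⟩ := M.exists_isBasis Y hYE
  obtain ⟨J₂, hJ₂, hJJ₂⟩ := hJ.indep.subset_isBasis_of_subset (hJ.subset.trans hYX) hXE
  have hJ₂fin : J₂.Finite := M.set_finite J₂ hJ₂.indep.subset_ground
  have heq : J = J₂ :=
    Set.eq_of_subset_of_ncard_le hJJ₂
      (by rw [← aux_basis_rk hJ₂, ← aux_basis_rk hJ]; exact hrk) hJ₂fin
  have hJX : M.IsBasis J X := heq ▸ hJ₂
  refine aux_rk_le fun I hIX hI => ?_
  rw [aux_contract_indep_iff hC] at hI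
  obtain ⟨⟨C'', hC'', hIC''⟩, hdjI⟩ := hI
  have hJC''E : J ∪ C'' ⊆ M.E :=
    union_subset hJ.indep.subset_ground hC''.indep.subset_ground
  obtain ⟨K, hK, hC''K⟩ := hC''.indep.subset_isBasis_of_subset subset_union_right hJC''E
  have hsub : I ∪ C'' ⊆ M.closure K := by
    rw [hK.closure_eq_closure]
    refine union_subset ?_ (subset_union_right.trans (M.subset_closure _ hJC''E))
    exact (hIX.trans hJX.subset_closure).trans (M.closure_subset_closure subset_union_left)
  obtain ⟨K₂, hK₂, hIK₂⟩ := hIC''.subset_isBasis_of_subset hsub (M.closure_subset_ground K)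
  have hKfin : K.Finite := M.set_finite K hK.indep.subset_ground
  have hK₂fin : K₂.Finite := M.set_finite K₂ hK₂.indep.subset_ground
  have hIfin : I.Finite := M.set_finite I (subset_union_left.trans hIC''.subset_ground)
  have hC''fin : C''.Finite := M.set_finite C'' hC''.indep.subset_ground
  have hdjIC'' : Disjoint I C'' := hdjI.mono_right hC''.subset
  have hcard : K₂.ncard = K.ncard := by
    rw [Set.ncard_def, Set.ncard_def, hK₂.encard_eq_encard hK.indep.isBasis_closure]
  have h1 : I.ncard + C''.ncard ≤ K.ncard := by
    rw [← Set.ncard_union_eq hdjIC'' hIfin hC''fin, ← hcard]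
    exact Set.ncard_le_ncard hIK₂ hK₂fin
  have hKC'' : (K \ C'').ncard + C''.ncard = K.ncard :=
    Set.ncard_diff_add_ncard_of_subset hC''K hKfin
  have hI'Y : K \ C'' ⊆ Y := by
    intro x hx
    rcases hK.subset hx.1 with h | h
    · exact hJ.subset h
    · exact absurd h hx.2
  have hI'indep : (M.contract' C).Indep (K \ C'') := by
    refine aux_contract_indep_of hC'' ?_ ?_
    · rw [diff_union_of_subset hC''K]
      exact hK.indep
    · exact (subset_diff.mp (hI'Y.trans (hYX.trans hX))).2
  have h2 := aux_ncard_le_rk hI'Y hI'indep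
  omega

lemma aux_rank_restrict (M : Matroid α) (X : Set α) : (M ↾ X).rank = M.rk X := by
  rw [rank, restrict_ground_eq, aux_rk_restrict subset_rfl]

end Aux

/-- If `d ≥ 1`, `N` is a minor of a finite matroid `M`, `X ⊆ E(N)` and `X` is
`d`-thick in `M`, then `X` is `d`-thick in `N`. -/
theorem statement4 {α : Type*} (d : ℕ) (hd : 1 ≤ d)
    (M N : Matroid α) (hM : M.Finite) (hN : N.IsMinor' M)
    (X : Set α) (hX : X ⊆ N.E) (hthick : M.ThickIn d X) :
    N.ThickIn d X := by
  haveI := hM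
  obtain ⟨C, D, rfl⟩ := hN
  set C₀ := C ∩ M.E with hC₀def
  have hC₀E : C₀ ⊆ M.E := inter_subset_right
  have hgr : M✶.E \ C = M✶.E \ C₀ := by
    rw [hC₀def, show (M✶.E : Set α) = M.E from rfl, Set.diff_inter_self_eq_diff]
  have hcc : M.contract' C = M.contract' C₀ := by
    rw [contract', contract', delete', delete', hgr]
  have hgr' : M.E \ C = M.E \ C₀ := hgr
  have hXsub : X ⊆ M.E \ C₀ := by
    intro x hx
    have h := hX hx
    rw [delete', restrict_ground_eq, aux_contract_ground] at h
    exact hgr' ▸ h.1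
  have hNX : (M.contract' C).delete' D ↾ X = M.contract' C₀ ↾ X := by
    rw [delete', Matroid.restrict_restrict_eq _ (show X ⊆ (M.contract' C).E \ D from hX), hcc]
  intro 𝒞 h1 h2
  refine hthick 𝒞 (fun W hW => ?_) h2
  obtain ⟨hWX, hWlt⟩ := h1 W hW
  have hWX' : W ⊆ X := hWX
  rw [show (((M.contract' C).delete' D ↾ X).rk W) = (M.contract' C₀).rk W from by
        rw [hNX, aux_rk_restrict hWX'],
      show (((M.contract' C).delete' D ↾ X).rank) = (M.contract' C₀).rk X from by
        rw [hNX, aux_rank_restrict]] at hWlt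
  refine ⟨hWX, ?_⟩
  rw [aux_rk_restrict hWX', aux_rank_restrict]
  by_contra hcon
  push_neg at hcon
  have := aux_key hC₀E hWX' hXsub hcon
  omega


end Matroid
end

section
/- Let d ≥ 1 be an integer, M be a finite matroid, and 𝒳 be a collection of subsets of E(M) each of which is d-thick in M. If ℱ is a d-minimal cover of 𝒳 in M, then every subcollection of ℱ is d-scattered in M. -/
open Set
open scoped Classical

namespace Matroid

variable {α : Type*} {M : Matroid α}

lemma sum_image_le' {β γ : Type*} [DecidableEq γ] (s : Finset β) (f : β → γ) (g : γ → ℕ) :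
    ∑ y ∈ s.image f, g y ≤ ∑ x ∈ s, g (f x) := by
  induction s using Finset.induction with
  | empty => simp
  | @insert a s ha ih =>
    rw [Finset.image_insert, Finset.sum_insert ha]
    by_cases hfa : f a ∈ s.image f
    · rw [Finset.insert_eq_self.2 hfa]
      exact ih.trans (Nat.le_add_left _ _)
    · rw [Finset.sum_insert hfa]
      exact Nat.add_le_add_left ih _

lemma IsBasis'.rk_eq (hE : M.E.Finite) {I X : Set α} (hI : M.IsBasis' I X) : M.rk X = I.ncard := by
  have hne : {n | ∃ I, I ⊆ X ∧ M.Indep I ∧ I.ncard = n}.Nonempty :=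
    ⟨0, ∅, empty_subset X, M.empty_indep, by simp⟩
  have hbdd : BddAbove {n | ∃ I, I ⊆ X ∧ M.Indep I ∧ I.ncard = n} := by
    refine ⟨M.E.ncard, ?_⟩
    rintro n ⟨J, _, hJ, rfl⟩
    exact ncard_le_ncard hJ.subset_ground hE
  apply le_antisymm
  · refine csSup_le hne ?_
    rintro n ⟨J, hJX, hJ, rfl⟩
    obtain ⟨I', hI', hJI'⟩ := hJ.subset_isBasis'_of_subset hJX
    have hee : I'.encard = I.encard := hI'.encard_eq_encard hI
    have : J.ncard ≤ I'.ncard :=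
      ncard_le_ncard hJI' (hE.subset hI'.indep.subset_ground)
    rwa [Set.ncard_def I', hee, ← Set.ncard_def] at this
  · exact le_csSup hbdd ⟨I, hI.subset, hI.indep, rfl⟩

lemma le_rk (hE : M.E.Finite) {I X : Set α} (hIX : I ⊆ X) (hI : M.Indep I) :
    I.ncard ≤ M.rk X := by
  obtain ⟨J, hJ⟩ := M.exists_isBasis' X
  rw [hJ.rk_eq hE]
  obtain ⟨I', hI', hII'⟩ := hI.subset_isBasis'_of_subset hIX
  have hee : I'.encard = J.encard := hI'.encard_eq_encard hJ
  have : I.ncard ≤ I'.ncard := ncard_le_ncard hII' (hE.subset hI'.indep.subset_ground)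
  rwa [Set.ncard_def I', hee, ← Set.ncard_def] at this

lemma rk_mono (hE : M.E.Finite) {X Y : Set α} (h : X ⊆ Y) : M.rk X ≤ M.rk Y := by
  obtain ⟨I, hI⟩ := M.exists_isBasis' X
  rw [hI.rk_eq hE]
  exact le_rk hE (hI.subset.trans h) hI.indep

lemma rk_closure_eq (hE : M.E.Finite) (X : Set α) : M.rk (M.closure X) = M.rk X := by
  obtain ⟨I, hI⟩ := M.exists_isBasis' X
  rw [hI.rk_eq hE, hI.isBasis_closure_right.isBasis'.rk_eq hE]

lemma rk_restrict {R X : Set α} (hXR : X ⊆ R) : (M ↾ R).rk X = M.rk X := by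
  unfold rk
  congr 1
  ext n
  simp only [mem_setOf_eq, restrict_indep_iff]
  constructor
  · rintro ⟨I, hIX, ⟨hI, _⟩, rfl⟩; exact ⟨I, hIX, hI, rfl⟩
  · rintro ⟨I, hIX, hI, rfl⟩; exact ⟨I, hIX, ⟨hI, hIX.trans hXR⟩, rfl⟩

lemma subset_closure_of_rk_ge (hE : M.E.Finite) {X Y : Set α} (hYX : Y ⊆ X) (hXE : X ⊆ M.E)
    (h : M.rk X ≤ M.rk Y) : X ⊆ M.closure Y := by
  obtain ⟨I, hI⟩ := M.exists_isBasis' Y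
  obtain ⟨J, hJ, hIJ⟩ := hI.indep.subset_isBasis'_of_subset (hI.subset.trans hYX)
  have hIJ' : I = J := Set.eq_of_subset_of_ncard_le hIJ
    (by rw [← hI.rk_eq hE, ← hJ.rk_eq hE]; exact h) (hE.subset hJ.indep.subset_ground)
  calc X ⊆ M.closure X := M.subset_closure X hXE
    _ = M.closure J := hJ.closure_eq_closure.symm
    _ = M.closure I := by rw [hIJ']
    _ ⊆ M.closure Y := M.closure_subset_closure hI.subset


lemma rank_restrict' (X : Set α) : (M ↾ X).rank = (M ↾ X).rk X := by
  rw [rank, restrict_ground_eq]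

lemma not_thickIn_empty {d : ℕ} (hd : 1 ≤ d) : ¬ M.ThickIn d (∅ : Set α) := by
  intro h
  have := h ∅ (by simp) (by simp)
  simp at this
  omega

lemma thick_of_minimalCover {d : ℕ} (hd : 1 ≤ d) (hM : M.Finite) {𝒳 ℱ : Finset (Set α)}
    (hthick : ∀ X ∈ 𝒳, M.ThickIn d X) (hcover : M.MinimalCoverOf d ℱ 𝒳) :
    ∀ F ∈ ℱ, M.ThickIn d F := by
  intro F hF
  have hE : M.E.Finite := hM.ground_finite
  have hFE : F ⊆ M.E := (hcover.1.1 F hF)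
  by_contra hcon
  rw [ThickIn, Thick] at hcon
  push_neg at hcon
  obtain ⟨𝒞, h𝒞, hcov, hcard⟩ := hcon
  rw [restrict_ground_eq] at h𝒞 hcov
  -- key claim
  have key : ∀ X ∈ 𝒳, X ⊆ F → ∃ C ∈ 𝒞, X ⊆ M.closure C := by
    intro X hX hXF
    by_contra hno
    push_neg at hno
    have hXE : X ⊆ M.E := hXF.trans hFE
    have hthX := hthick X hX (𝒞.image (fun C => X ∩ M.closure C)) ?_ ?_
    · have hle : (𝒞.image (fun C => X ∩ M.closure C)).card ≤ 𝒞.card := Finset.card_image_le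
      omega
    · rintro D hD
      obtain ⟨C, hC, rfl⟩ := Finset.mem_image.1 hD
      refine ⟨by rw [restrict_ground_eq]; exact inter_subset_left, ?_⟩
      rw [rk_restrict inter_subset_left, rank_restrict', rk_restrict Subset.rfl]
      by_contra hlt
      push_neg at hlt
      have hXcl : X ⊆ M.closure (X ∩ M.closure C) :=
        subset_closure_of_rk_ge hE inter_subset_left hXE hlt
      have : X ⊆ M.closure C := by
        refine hXcl.trans ?_
        have := M.closure_subset_closure (inter_subset_right (s := X) (t := M.closure C))
        rwa [closure_closure] at this
      exact hno C hC this
    · rw [restrict_ground_eq]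
      intro x hx
      obtain ⟨C, hCmem, hxC⟩ := hcov (hXF hx)
      refine ⟨X ∩ M.closure C, ?_, hx, ?_⟩
      · exact Finset.mem_coe.2 (Finset.mem_image_of_mem _ (Finset.mem_coe.1 hCmem))
      · exact M.subset_closure C (((h𝒞 C (Finset.mem_coe.1 hCmem)).1).trans hFE) hxC
  by_cases hemp : 𝒞 = ∅
  · -- F = ∅, remove F from ℱ
    subst hemp
    have hFemp : F = ∅ := by
      refine eq_empty_of_subset_empty ?_
      simpa using hcov
    have hcov' : M.CoverOf (ℱ.erase F) 𝒳 := by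
      refine ⟨fun F' hF' => hcover.1.1 F' (Finset.erase_subset _ _ hF'), fun X hX => ?_⟩
      obtain ⟨F₀, hF₀, hXF₀⟩ := hcover.1.2 X hX
      rcases eq_or_ne F₀ F with rfl | hne
      · exfalso
        have : X = ∅ := eq_empty_of_subset_empty (hFemp ▸ hXF₀)
        exact not_thickIn_empty hd (this ▸ hthick X hX)
      · exact ⟨F₀, Finset.mem_erase.2 ⟨hne, hF₀⟩, hXF₀⟩
    have hle := hcover.2 _ hcov'
    have hsum : M.wt d (ℱ.erase F) + d ^ M.rk F = M.wt d ℱ := Finset.sum_erase_add ℱ _ hF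
    have hpos : 1 ≤ d ^ M.rk F := Nat.one_le_pow _ _ hd
    have hpos' : M.wt d (ℱ.erase F) + d ^ M.rk F = M.wt d ℱ := hsum
    omega
  · obtain ⟨C₀, hC₀⟩ := Finset.nonempty_of_ne_empty hemp
    have hrkF : ∀ C ∈ 𝒞, M.rk C < M.rk F := by
      intro C hC
      have := (h𝒞 C hC).2
      rwa [rank_restrict', rk_restrict (h𝒞 C hC).1, rk_restrict Subset.rfl] at this
    have hrkF1 : 1 ≤ M.rk F := lt_of_le_of_lt (Nat.zero_le _) (hrkF C₀ hC₀)
    have hcov'' : M.CoverOf (ℱ.erase F ∪ 𝒞.image M.closure) 𝒳 := by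
      constructor
      · intro G hG
        rcases Finset.mem_union.1 hG with hG | hG
        · exact hcover.1.1 G (Finset.erase_subset _ _ hG)
        · obtain ⟨C, _, rfl⟩ := Finset.mem_image.1 hG
          exact M.closure_subset_ground C
      · intro X hX
        obtain ⟨F₀, hF₀, hXF₀⟩ := hcover.1.2 X hX
        rcases eq_or_ne F₀ F with rfl | hne
        · obtain ⟨C, hC, hXC⟩ := key X hX hXF₀
          exact ⟨M.closure C, Finset.mem_union_right _ (Finset.mem_image_of_mem _ hC), hXC⟩
        · exact ⟨F₀, Finset.mem_union_left _ (Finset.mem_erase.2 ⟨hne, hF₀⟩), hXF₀⟩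
    have hle := hcover.2 _ hcov''
    have hw1 : M.wt d (ℱ.erase F ∪ 𝒞.image M.closure) ≤ M.wt d (ℱ.erase F) + M.wt d (𝒞.image M.closure) := by
      rw [wt, wt, wt]
      have := Finset.sum_union_inter (s₁ := ℱ.erase F) (s₂ := 𝒞.image M.closure)
        (f := fun F => d ^ M.rk F)
      omega
    have hw2 : M.wt d (𝒞.image M.closure) ≤ 𝒞.card * d ^ (M.rk F - 1) := by
      rw [wt]
      calc ∑ G ∈ 𝒞.image M.closure, d ^ M.rk G
          ≤ ∑ C ∈ 𝒞, d ^ M.rk (M.closure C) := sum_image_le' _ _ _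
        _ ≤ ∑ _C ∈ 𝒞, d ^ (M.rk F - 1) := by
            refine Finset.sum_le_sum fun C hC => ?_
            rw [rk_closure_eq hE]
            exact Nat.pow_le_pow_right hd (by have := hrkF C hC; omega)
        _ = 𝒞.card * d ^ (M.rk F - 1) := by rw [Finset.sum_const, smul_eq_mul]
    have hw3 : 𝒞.card * d ^ (M.rk F - 1) < d ^ M.rk F := by
      have hpow : d ^ M.rk F = d * d ^ (M.rk F - 1) := by
        conv_lhs => rw [show M.rk F = (M.rk F - 1) + 1 by omega]
        ring
      have hx : 1 ≤ d ^ (M.rk F - 1) := Nat.one_le_pow _ _ hd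
      calc 𝒞.card * d ^ (M.rk F - 1) ≤ (d - 1) * d ^ (M.rk F - 1) :=
            Nat.mul_le_mul_right _ (by omega)
        _ < d * d ^ (M.rk F - 1) := by
            apply Nat.mul_lt_mul_of_lt_of_le (by omega) le_rfl
            omega
        _ = d ^ M.rk F := hpow.symm
    have hsum : M.wt d (ℱ.erase F) + d ^ M.rk F = M.wt d ℱ := Finset.sum_erase_add ℱ _ hF
    omega

end Matroid

namespace Matroid

/-- If `d ≥ 1`, every member of `𝒳` is `d`-thick in the finite matroid `M`,
and `ℱ` is a `d`-minimal cover of `𝒳` in `M`, then every subcollection of `ℱ` is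
`d`-scattered in `M`. -/
theorem statement13 {α : Type*} (d : ℕ) (hd : 1 ≤ d)
    (M : Matroid α) (hM : M.Finite) (𝒳 ℱ : Finset (Set α))
    (hthick : ∀ X ∈ 𝒳, M.ThickIn d X)
    (hcover : M.MinimalCoverOf d ℱ 𝒳) :
    ∀ ℱ' ⊆ ℱ, M.Scattered d ℱ' := by
  intro ℱ' hsub
  have hE : M.E.Finite := hM.ground_finite
  refine ⟨fun F hF => thick_of_minimalCover hd hM hthick hcover F (hsub hF), ?_, ?_⟩
  · constructor
    · intro C hC
      obtain ⟨F, _, rfl⟩ := Finset.mem_image.1 hC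
      exact M.closure_subset_ground F
    · intro X hX
      exact ⟨M.closure X, Finset.mem_image_of_mem _ hX,
        M.subset_closure X (hcover.1.1 X (hsub hX))⟩
  · intro 𝒢 h𝒢
    have h1 : M.wt d (ℱ'.image M.closure) ≤ M.wt d ℱ' := by
      rw [wt, wt]
      calc ∑ G ∈ ℱ'.image M.closure, d ^ M.rk G
          ≤ ∑ F ∈ ℱ', d ^ M.rk (M.closure F) := sum_image_le' _ _ _
        _ = ∑ F ∈ ℱ', d ^ M.rk F := by
            refine Finset.sum_congr rfl fun F _ => ?_
            rw [rk_closure_eq hE]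
    refine h1.trans ?_
    have hcov'' : M.CoverOf ((ℱ \ ℱ') ∪ 𝒢) 𝒳 := by
      constructor
      · intro G hG
        rcases Finset.mem_union.1 hG with hG | hG
        · exact hcover.1.1 G (Finset.mem_sdiff.1 hG).1
        · exact h𝒢.1 G hG
      · intro X hX
        obtain ⟨F₀, hF₀, hXF₀⟩ := hcover.1.2 X hX
        by_cases hmem : F₀ ∈ ℱ'
        · obtain ⟨G, hG, hFG⟩ := h𝒢.2 F₀ hmem
          exact ⟨G, Finset.mem_union_right _ hG, hXF₀.trans hFG⟩
        · exact ⟨F₀, Finset.mem_union_left _ (Finset.mem_sdiff.2 ⟨hF₀, hmem⟩), hXF₀⟩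
    have hle := hcover.2 _ hcov''
    have hw1 : M.wt d ((ℱ \ ℱ') ∪ 𝒢) ≤ M.wt d (ℱ \ ℱ') + M.wt d 𝒢 := by
      rw [wt, wt, wt]
      have := Finset.sum_union_inter (s₁ := ℱ \ ℱ') (s₂ := 𝒢) (f := fun F => d ^ M.rk F)
      omega
    have hsum : M.wt d (ℱ \ ℱ') + M.wt d ℱ' = M.wt d ℱ := by
      rw [wt, wt, wt]
      exact Finset.sum_sdiff hsub
    omega

end Matroid
end

section
/- Let a ≥ 1 and d ≥ 1 be integers. If M is a finite matroid and 𝒳 ⊆ ℛ_a(M) is d-scattered in M, then ε_M(𝒳) ≤ d^{r(M) - a}. -/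
open Set
open scoped Classical

namespace Matroid

lemma rk_eq_ncard_of_basis {α : Type*} {M : Matroid α} {I X : Set α} (hM : M.Finite)
    (hI : M.IsBasis I X) : M.rk X = I.ncard := by
  have hfin : ∀ J : Set α, M.Indep J → J.Finite :=
    fun J hJ => hM.ground_finite.subset hJ.subset_ground
  have hub : ∀ n ∈ {n | ∃ J, J ⊆ X ∧ M.Indep J ∧ J.ncard = n}, n ≤ I.ncard := by
    rintro n ⟨J, hJX, hJ, rfl⟩
    obtain ⟨I', hI', hJI'⟩ := hJ.subset_isBasis_of_subset hJX hI.subset_ground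
    have hcard : I'.ncard = I.ncard := by
      have h := hI'.encard_eq_encard hI
      simp only [Set.ncard, h]
    exact hcard ▸ Set.ncard_le_ncard hJI' (hfin _ hI'.indep)
  have hmem : I.ncard ∈ {n | ∃ J, J ⊆ X ∧ M.Indep J ∧ J.ncard = n} :=
    ⟨I, hI.subset, hI.indep, rfl⟩
  exact le_antisymm (csSup_le ⟨I.ncard, hmem⟩ hub) (le_csSup ⟨I.ncard, hub⟩ hmem)

lemma rk_closure_eq' {α : Type*} {M : Matroid α} {X : Set α} (hM : M.Finite)
    (hX : X ⊆ M.E) : M.rk (M.closure X) = M.rk X := by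
  obtain ⟨I, hI⟩ := M.exists_isBasis X hX
  rw [rk_eq_ncard_of_basis hM hI.isBasis_closure_right, rk_eq_ncard_of_basis hM hI]

lemma rk_le_rk_ground {α : Type*} {M : Matroid α} {X : Set α} (hM : M.Finite)
    (hX : X ⊆ M.E) : M.rk X ≤ M.rk M.E := by
  obtain ⟨I, hI⟩ := M.exists_isBasis X hX
  obtain ⟨B, hB, hIB⟩ := hI.indep.subset_isBasis_of_subset hI.indep.subset_ground
  rw [rk_eq_ncard_of_basis hM hI, rk_eq_ncard_of_basis hM hB]
  exact Set.ncard_le_ncard hIB (hM.ground_finite.subset hB.indep.subset_ground)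

/-- If `a, d ≥ 1`, `M` is a finite matroid and `𝒳 ⊆ ℛ_a(M)` is
`d`-scattered in `M`, then `ε_M(𝒳) ≤ d^{r(M)-a}`. -/
theorem statement14 {α : Type*} (a d : ℕ) (ha : 1 ≤ a) (hd : 1 ≤ d)
    (M : Matroid α) (hM : M.Finite) (𝒳 : Finset (Set α))
    (h𝒳 : ∀ X ∈ 𝒳, X ⊆ M.E ∧ M.rk X = a)
    (hscat : M.Scattered d 𝒳) :
    M.eps 𝒳 ≤ d ^ (M.rank - a) := by
  have hdpos : 0 < d := hd
  have hne : (0:ℕ) ∈ {n | ∃ 𝒴 : Finset (Set α), 𝒴 ⊆ 𝒳 ∧ M.SimpleColl 𝒴 ∧ 𝒴.card = n} :=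
    ⟨∅, by simp, by simp [SimpleColl], rfl⟩
  unfold eps
  apply csSup_le ⟨0, hne⟩
  rintro n ⟨𝒴, h𝒴sub, hsimple, rfl⟩
  rcases Finset.eq_empty_or_nonempty 𝒴 with rfl | ⟨X0, hX0⟩
  · simp
  have hX0𝒳 : X0 ∈ 𝒳 := h𝒴sub hX0
  have harank : a ≤ M.rank := by
    rw [← (h𝒳 X0 hX0𝒳).2]
    exact rk_le_rk_ground hM (h𝒳 X0 hX0𝒳).1
  have hcov : M.CoverOf {M.E} 𝒳 := by
    refine ⟨by simp, fun X hX => ⟨M.E, by simp, (h𝒳 X hX).1⟩⟩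
  have hmin := hscat.2.2 {M.E} hcov
  have hwt1 : M.wt d {M.E} = d ^ M.rank := by simp [wt, rank]
  have hwt2 : M.wt d (𝒳.image M.closure) = (𝒳.image M.closure).card * d ^ a := by
    rw [wt, Finset.sum_congr rfl (fun F hF => ?_), Finset.sum_const, smul_eq_mul]
    obtain ⟨X, hX, rfl⟩ := Finset.mem_image.mp hF
    rw [rk_closure_eq' hM (h𝒳 X hX).1, (h𝒳 X hX).2]
  have hcard : 𝒴.card ≤ (𝒳.image M.closure).card :=
    Finset.card_le_card_of_injOn M.closure
      (fun X hX => Finset.mem_image_of_mem _ (h𝒴sub hX))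
      (fun X hX Y hY h => hsimple X hX Y hY h)
  have hkey : 𝒴.card * d ^ a ≤ d ^ (M.rank - a) * d ^ a := by
    calc 𝒴.card * d ^ a ≤ (𝒳.image M.closure).card * d ^ a :=
          Nat.mul_le_mul_right _ hcard
      _ = M.wt d (𝒳.image M.closure) := hwt2.symm
      _ ≤ M.wt d {M.E} := hmin
      _ = d ^ M.rank := hwt1
      _ = d ^ (M.rank - a) * d ^ a := by
          rw [← pow_add, Nat.sub_add_cancel harank]
  exact Nat.le_of_mul_le_mul_right hkey (pow_pos hdpos a)

end Matroid
end
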